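/- For a finitely generated torsion module M over the PID Λ = ℚ[t,t⁻¹], there is a (non-natural) Λ-module isomorphism between M and Hom_Λ(M, Q(Λ)/Λ), where Q(Λ) is the field of fractions of Λ. -/

import Mathlib

open Polynomial in
instance : IsLocalization (Submonoid.powers (X : ℚ[X])) (LaurentPolynomial ℚ) :=
  LaurentPolynomial.isLocalization

open Polynomial in
instance : IsDomain (LaurentPolynomial ℚ) :=
  IsLocalization.isDomain_of_le_nonZeroDivisors (S := LaurentPolynomial ℚ) (R := ℚ[X])
      (M := Submonoid.powers (X : ℚ[X]))
    (powers_le_nonZeroDivisors_of_noZeroDivisors Polynomial.X_ne_zero)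

open Polynomial in
instance : IsPrincipalIdealRing (LaurentPolynomial ℚ) := by
  constructor
  intro S
  obtain ⟨a, ha⟩ := (IsPrincipalIdealRing.principal
    (Ideal.comap (algebraMap ℚ[X] (LaurentPolynomial ℚ)) S))
  refine ⟨algebraMap ℚ[X] (LaurentPolynomial ℚ) a, ?_⟩
  have h := IsLocalization.map_comap (Submonoid.powers (X : ℚ[X])) (LaurentPolynomial ℚ) S
  rw [← h, Ideal.under_def, ha]
  simp [Ideal.submodule_span_eq, Ideal.map_span]

section CyclicDuality

open Submodule

variable {R : Type} [CommRing R] [IsDomain R]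

local notation "K" => FractionRing R
local notation "L" => LinearMap.range (Algebra.linearMap R (FractionRing R))
local notation "Q" => (FractionRing R ⧸ LinearMap.range (Algebra.linearMap R (FractionRing R)))

/-- The map `R ⧸ (a) → Q(R)/R` given by `y ↦ x·y/a`, for fixed `x`. -/
noncomputable def innerMap (a x : R) : (R ⧸ Submodule.span R {a}) →ₗ[R] Q :=
  Submodule.liftQ _ ((Submodule.mkQ L).comp
    (LinearMap.toSpanSingleton R K (algebraMap R K x / algebraMap R K a)))
    (by
      rw [Submodule.span_le, Set.singleton_subset_iff]
      simp only [SetLike.mem_coe, LinearMap.mem_ker, LinearMap.comp_apply,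
        LinearMap.toSpanSingleton_apply, Submodule.mkQ_apply, Submodule.Quotient.mk_eq_zero]
      rcases eq_or_ne a 0 with rfl | ha
      · simp
      · have haK : algebraMap R K a ≠ 0 := by simpa using ha
        have : a • (algebraMap R K x / algebraMap R K a) = algebraMap R K x := by
          rw [Algebra.smul_def]
          field_simp
        rw [this]
        exact ⟨x, rfl⟩)

@[simp] lemma innerMap_apply (a x r : R) :
    innerMap a x (Submodule.Quotient.mk r) =
      Submodule.Quotient.mk (r • (algebraMap R K x / algebraMap R K a)) := rfl

/-- The map `R → Hom(R ⧸ (a), Q(R)/R)`, `x ↦ (y ↦ x·y/a)`. -/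
noncomputable def dualMap (a : R) : R →ₗ[R] ((R ⧸ Submodule.span R {a}) →ₗ[R] Q) where
  toFun x := innerMap a x
  map_add' x y := by
    apply Submodule.linearMap_qext
    apply LinearMap.ext; intro r
    simp only [LinearMap.comp_apply, Submodule.mkQ_apply, innerMap_apply, LinearMap.add_apply]
    rw [← Submodule.Quotient.mk_add, ← smul_add, map_add, add_div]
  map_smul' c x := by
    apply Submodule.linearMap_qext
    apply LinearMap.ext; intro r
    simp only [LinearMap.comp_apply, Submodule.mkQ_apply, innerMap_apply, RingHom.id_apply,
      LinearMap.smul_apply]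
    rw [← Submodule.Quotient.mk_smul, smul_smul]
    congr 1
    rw [smul_eq_mul, map_mul, mul_div_assoc, ← Algebra.smul_def, smul_smul, mul_comm]

/-- The duality map `R ⧸ (a) → Hom(R ⧸ (a), Q(R)/R)`. -/
noncomputable def cyclicDual (a : R) :
    (R ⧸ Submodule.span R {a}) →ₗ[R] ((R ⧸ Submodule.span R {a}) →ₗ[R] Q) :=
  Submodule.liftQ _ (dualMap a) (by
    rw [Submodule.span_le, Set.singleton_subset_iff]
    simp only [SetLike.mem_coe, LinearMap.mem_ker]
    apply Submodule.linearMap_qext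
    apply LinearMap.ext; intro r
    show innerMap a a (Submodule.Quotient.mk r) = 0
    rw [innerMap_apply, Submodule.Quotient.mk_eq_zero]
    rcases eq_or_ne a 0 with rfl | ha
    · simp
    · have haK : algebraMap R K a ≠ 0 := by simpa using ha
      have : (r • (algebraMap R K a / algebraMap R K a)) = algebraMap R K r := by
        rw [div_self haK, Algebra.smul_def, mul_one]
      rw [this]
      exact ⟨r, rfl⟩)

lemma cyclicDual_bijective (a : R) (ha : a ≠ 0) : Function.Bijective (cyclicDual a) := by
  have haK : algebraMap R K a ≠ 0 := by simpa using ha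
  constructor
  · rw [← LinearMap.ker_eq_bot, eq_bot_iff]
    intro x hx
    obtain ⟨x, rfl⟩ := Submodule.Quotient.mk_surjective _ x
    simp only [LinearMap.mem_ker] at hx
    have h1 : innerMap a x (Submodule.Quotient.mk (1 : R)) = 0 := by
      have := congrArg (fun f => f (Submodule.Quotient.mk (1 : R))) hx
      exact this
    rw [innerMap_apply, one_smul, Submodule.Quotient.mk_eq_zero] at h1
    obtain ⟨z, hz⟩ := h1
    simp only [Algebra.linearMap_apply] at hz
    rw [eq_div_iff haK] at hz
    have : algebraMap R K x = algebraMap R K (z * a) := by rw [map_mul, ← hz]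
    have hx2 : x = z * a := IsFractionRing.injective R K this
    simp only [mem_bot, Submodule.Quotient.mk_eq_zero]
    exact Submodule.mem_span_singleton.2 ⟨z, by rw [hx2, smul_eq_mul]⟩
  · intro g
    obtain ⟨q, hq⟩ := Submodule.Quotient.mk_surjective L (g (Submodule.Quotient.mk 1))
    have h0 : Submodule.Quotient.mk (a • q) = (0 : Q) := by
      rw [Submodule.Quotient.mk_smul, hq, ← map_smul]
      have : a • (Submodule.Quotient.mk (1:R) : R ⧸ Submodule.span R {a}) = 0 := by
        rw [← Submodule.Quotient.mk_smul, Submodule.Quotient.mk_eq_zero]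
        exact Submodule.mem_span_singleton.2 ⟨1, by simp⟩
      rw [this, map_zero]
    rw [Submodule.Quotient.mk_eq_zero] at h0
    obtain ⟨x, hx⟩ := h0
    simp only [Algebra.linearMap_apply] at hx
    refine ⟨Submodule.Quotient.mk x, ?_⟩
    apply Submodule.linearMap_qext
    apply LinearMap.ext; intro r
    show innerMap a x (Submodule.Quotient.mk r) = g (Submodule.Quotient.mk r)
    rw [innerMap_apply]
    have hxq : algebraMap R K x / algebraMap R K a = q := by
      rw [div_eq_iff haK, hx, Algebra.smul_def, mul_comm]
    rw [hxq]
    calc (Submodule.Quotient.mk (r • q) : Q) = r • Submodule.Quotient.mk q := by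
          rw [Submodule.Quotient.mk_smul]
      _ = r • g (Submodule.Quotient.mk 1) := by rw [hq]
      _ = g (r • Submodule.Quotient.mk 1) := (map_smul g r _).symm
      _ = g (Submodule.Quotient.mk r) := by
          rw [← Submodule.Quotient.mk_smul, smul_eq_mul, mul_one]

/-- The duality isomorphism `R ⧸ (a) ≃ Hom(R ⧸ (a), Q(R)/R)` for `a ≠ 0`. -/
noncomputable def cyclicDualEquiv (a : R) (ha : a ≠ 0) :
    (R ⧸ Submodule.span R {a}) ≃ₗ[R] ((R ⧸ Submodule.span R {a}) →ₗ[R] Q) :=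
  LinearEquiv.ofBijective _ (cyclicDual_bijective a ha)

end CyclicDuality

/-- `Λ = ℚ[t,t⁻¹]`, the ring of rational Laurent polynomials (a PID). -/
abbrev Λ : Type := LaurentPolynomial ℚ

/-- The `Λ`-module `Q(Λ)/Λ`, the field of fractions of `Λ` modulo `Λ`. -/
abbrev QLamModLam : Type :=
  FractionRing Λ ⧸ LinearMap.range (Algebra.linearMap Λ (FractionRing Λ))

/-- For a finitely generated torsion module `M` over the PID `Λ = ℚ[t,t⁻¹]`, there is a
(non-natural) `Λ`-module isomorphism between `M` and `Hom_Λ(M, Q(Λ)/Λ)`. -/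
theorem exists_linearEquiv_hom_fractionField_quotient
    (M : Type) [AddCommGroup M] [Module Λ M] [Module.Finite Λ M]
    (hM : Module.IsTorsion Λ M) :
    Nonempty (M ≃ₗ[Λ] (M →ₗ[Λ] QLamModLam)) := by
  classical
  obtain ⟨ι, hfin, p, hp, e, ⟨f⟩⟩ := Module.equiv_directSum_of_isTorsion hM
  have hne : ∀ i, p i ^ e i ≠ 0 := fun i => pow_ne_zero _ (hp i).ne_zero
  let C : ι → Type := fun i => Λ ⧸ Submodule.span Λ {p i ^ e i}
  let e2 : (DirectSum ι C) ≃ₗ[Λ] DirectSum ι (fun i => C i →ₗ[Λ] QLamModLam) :=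
    DFinsupp.mapRange.linearEquiv (fun i => cyclicDualEquiv (p i ^ e i) (hne i))
  let e3 : (DirectSum ι fun i => C i →ₗ[Λ] QLamModLam) ≃ₗ[Λ] ∀ i, (C i →ₗ[Λ] QLamModLam) :=
    DirectSum.linearEquivFunOnFintype Λ ι _
  let e4 : (∀ i, (C i →ₗ[Λ] QLamModLam)) ≃ₗ[Λ] ((DirectSum ι C) →ₗ[Λ] QLamModLam) :=
    DFinsupp.lsum Λ
  let e5 : ((DirectSum ι C) →ₗ[Λ] QLamModLam) ≃ₗ[Λ] (M →ₗ[Λ] QLamModLam) :=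
    LinearEquiv.arrowCongr f.symm (LinearEquiv.refl _ _)
  exact ⟨f ≪≫ₗ e2 ≪≫ₗ e3 ≪≫ₗ e4 ≪≫ₗ e5⟩
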